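/- arXiv:nlin/0003007 — 2 statements merged into one kernel-verified Lean document; each statement's English description precedes it below -/
import Mathlib

section
/- Let m ≥ 1, let π : [0,1] → ℝ^m be C^{m+1}, and let p ∈ (0,1) with P = π(p) be such that the derivative vectors π^{(1)}(p), …, π^{(m)}(p) are linearly independent in ℝ^m. Then there exist constants C₁ > 0 and ε' > 0, independent of ε, such that for all 0 < ε < ε', min_{‖η‖ = 1} ∫_{p−ε}^{p+ε} ⟨η, π(x) − P⟩² dx ≥ C₁ ε^{2m+1}. -/
set_option maxHeartbeats 1000000

open Set Filter Topology

theorem myIteratedDerivWithin_subset {E : Type*} [NormedAddCommGroup E] [NormedSpace ℝ E]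
    {f : ℝ → E} {s t : Set ℝ} (hst : s ⊆ t) (hs : UniqueDiffOn ℝ s) (ht : UniqueDiffOn ℝ t)
    {N : ℕ} (hf : ContDiffOn ℝ (N : ℕ∞) f t) :
    ∀ n : ℕ, n ≤ N → Set.EqOn (iteratedDerivWithin n f s) (iteratedDerivWithin n f t) s := by
  intro n
  induction n with
  | zero => intro _ x hx; simp
  | succ n ih =>
    intro hn x hx
    rw [iteratedDerivWithin_succ, iteratedDerivWithin_succ,
      derivWithin_congr (ih (Nat.le_of_succ_le hn)) (ih (Nat.le_of_succ_le hn) hx),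
      derivWithin_subset hst (hs x hx)
        (hf.differentiableOn_iteratedDerivWithin (by exact_mod_cast hn) ht x (hst hx))]


theorem myPolyInt (m : ℕ) (c : Fin m → ℝ) (ε : ℝ) :
    ∫ t in (0:ℝ)..ε, (∑ i : Fin m, c i * t ^ ((i:ℕ)+1))^2
      = ∑ i : Fin m, ∑ j : Fin m, c i * c j * ε ^ ((i:ℕ)+(j:ℕ)+3) / ((i:ℕ)+(j:ℕ)+3) := by
  have hexp : ∀ t : ℝ, (∑ i : Fin m, c i * t ^ ((i:ℕ)+1))^2
      = ∑ i : Fin m, ∑ j : Fin m, (c i * c j) * t ^ ((i:ℕ)+(j:ℕ)+2) := by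
    intro t
    rw [sq, Finset.sum_mul_sum]
    exact Finset.sum_congr rfl fun i _ => Finset.sum_congr rfl fun j _ => by ring
  simp only [hexp]
  rw [intervalIntegral.integral_finset_sum (fun i _ => Continuous.intervalIntegrable
      (continuous_finset_sum _ fun j _ => by continuity) _ _)]
  refine Finset.sum_congr rfl fun i _ => ?_
  rw [intervalIntegral.integral_finset_sum (fun j _ => Continuous.intervalIntegrable
      (by continuity) _ _)]
  refine Finset.sum_congr rfl fun j _ => ?_
  rw [intervalIntegral.integral_const_mul, integral_pow]
  rw [zero_pow (by omega)]
  push_cast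
  ring

theorem myIntPos (m : ℕ) (b : Fin m → ℝ) (hb : b ≠ 0) :
    0 < ∫ t in (0:ℝ)..1, (∑ i : Fin m, b i * t ^ ((i:ℕ)+1))^2 := by
  set pol : Polynomial ℝ := ∑ i : Fin m, Polynomial.monomial ((i:ℕ)+1) (b i) with hpol
  have heval : ∀ t : ℝ, Polynomial.eval t pol = ∑ i : Fin m, b i * t ^ ((i:ℕ)+1) := by
    intro t
    rw [hpol, Polynomial.eval_finset_sum]
    simp [Polynomial.eval_monomial]
  obtain ⟨i, hi⟩ := Function.ne_iff.mp hb
  have hpolne : pol ≠ 0 := by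
    intro h
    apply hi
    have := congrArg (fun q => Polynomial.coeff q ((i:ℕ)+1)) h
    simp only [hpol, Polynomial.finset_sum_coeff, Polynomial.coeff_monomial,
      Polynomial.coeff_zero] at this
    rwa [Finset.sum_eq_single i (fun j _ hj => by
        rw [if_neg]; exact fun hc => hj (Fin.ext (by omega)))
      (fun h => absurd (Finset.mem_univ i) h), if_pos rfl] at this
  have hfin : Set.Finite {x : ℝ | Polynomial.IsRoot pol x} :=
    Polynomial.finite_setOf_isRoot hpolne
  have hinf : Set.Infinite (Set.Ioo (0:ℝ) 1) := Set.Ioo_infinite (by norm_num)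
  obtain ⟨t₀, ht₀⟩ := (hinf.diff hfin).nonempty
  have ht₀m : t₀ ∈ Set.Ioo (0:ℝ) 1 := ht₀.1
  have ht₀ne : Polynomial.eval t₀ pol ≠ 0 := ht₀.2
  -- open set where the square is positive
  have hU : IsOpen ({t : ℝ | 0 < (Polynomial.eval t pol)^2} ∩ Set.Ioo 0 1) :=
    (isOpen_lt continuous_const (by fun_prop)).inter isOpen_Ioo
  have ht₀U : t₀ ∈ {t : ℝ | 0 < (Polynomial.eval t pol)^2} ∩ Set.Ioo 0 1 :=
    ⟨lt_of_le_of_ne (sq_nonneg _) (Ne.symm (pow_ne_zero 2 ht₀ne)), ht₀m⟩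
  obtain ⟨r, hr, hball⟩ := Metric.isOpen_iff.mp hU t₀ ht₀U
  set a' := t₀ - r/2
  set b' := t₀ + r/2
  have hsub : Set.Icc a' b' ⊆ {t : ℝ | 0 < (Polynomial.eval t pol)^2} ∩ Set.Ioo 0 1 := by
    intro x hx
    apply hball
    rw [Metric.mem_ball, Real.dist_eq, abs_sub_lt_iff]
    constructor <;> [skip; skip] <;>
      · simp only [a', b'] at hx
        have := hx.1; have := hx.2; linarith
  have ha'b' : a' < b' := by simp only [a', b']; linarith
  have h0a : (0:ℝ) ≤ a' := (hsub (Set.left_mem_Icc.mpr ha'b'.le)).2.1.le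
  have hb1 : b' ≤ 1 := (hsub (Set.right_mem_Icc.mpr ha'b'.le)).2.2.le
  have hcont : Continuous fun t : ℝ => (∑ i : Fin m, b i * t ^ ((i:ℕ)+1))^2 := by
    simp only [← heval]; fun_prop
  have hii : ∀ u v : ℝ, IntervalIntegrable
      (fun t : ℝ => (∑ i : Fin m, b i * t ^ ((i:ℕ)+1))^2) MeasureTheory.volume u v :=
    fun u v => hcont.intervalIntegrable u v
  have hmid : 0 < ∫ t in a'..b', (∑ i : Fin m, b i * t ^ ((i:ℕ)+1))^2 := by
    refine intervalIntegral.intervalIntegral_pos_of_pos_on (hii a' b') ?_ ha'b'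
    intro x hx
    have := (hsub (Set.Ioo_subset_Icc_self hx)).1
    rwa [Set.mem_setOf_eq, heval] at this
  have hsplit : (∫ t in (0:ℝ)..1, (∑ i : Fin m, b i * t ^ ((i:ℕ)+1))^2)
      = (∫ t in (0:ℝ)..a', (∑ i : Fin m, b i * t ^ ((i:ℕ)+1))^2)
      + ((∫ t in a'..b', (∑ i : Fin m, b i * t ^ ((i:ℕ)+1))^2)
      + (∫ t in b'..(1:ℝ), (∑ i : Fin m, b i * t ^ ((i:ℕ)+1))^2)) := by
    rw [intervalIntegral.integral_add_adjacent_intervals (hii a' b') (hii b' 1),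
      intervalIntegral.integral_add_adjacent_intervals (hii 0 a') (hii a' 1)]
  rw [hsplit]
  have h1 : 0 ≤ ∫ t in (0:ℝ)..a', (∑ i : Fin m, b i * t ^ ((i:ℕ)+1))^2 :=
    intervalIntegral.integral_nonneg h0a (fun u _ => sq_nonneg _)
  have h2 : 0 ≤ ∫ t in b'..(1:ℝ), (∑ i : Fin m, b i * t ^ ((i:ℕ)+1))^2 :=
    intervalIntegral.integral_nonneg hb1 (fun u _ => sq_nonneg _)
  linarith

theorem myLam (m : ℕ) (hm : 1 ≤ m) : ∃ lam > (0:ℝ), ∀ b : Fin m → ℝ,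
    lam * (∑ i : Fin m, (b i)^2)
      ≤ ∑ i : Fin m, ∑ j : Fin m, b i * b j / (((i:ℕ):ℝ)+((j:ℕ):ℝ)+3) := by
  set H : EuclideanSpace ℝ (Fin m) → ℝ :=
    fun b => ∑ i : Fin m, ∑ j : Fin m, b i * b j / (((i:ℕ):ℝ)+((j:ℕ):ℝ)+3) with hH
  have hHc : Continuous H := by
    refine continuous_finset_sum _ fun i _ => continuous_finset_sum _ fun j _ => ?_
    exact (((continuous_apply i).comp (PiLp.continuous_ofLp (p := 2) (β := fun _ : Fin m => ℝ))).mul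
      ((continuous_apply j).comp (PiLp.continuous_ofLp (p := 2) (β := fun _ : Fin m => ℝ)))).div_const _
  have hIntH : ∀ b : EuclideanSpace ℝ (Fin m),
      H b = ∫ t in (0:ℝ)..1, (∑ i : Fin m, b i * t ^ ((i:ℕ)+1))^2 := by
    intro b
    rw [myPolyInt m (fun i => b i) 1]
    simp [hH]
  have hpos : ∀ u : EuclideanSpace ℝ (Fin m), ‖u‖ = 1 → 0 < H u := by
    intro u hu
    have hne : (fun i => u i) ≠ (0 : Fin m → ℝ) := by
      intro h
      have : u = 0 := by ext i; exact congrFun h i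
      rw [this] at hu; simp at hu
    rw [hIntH]
    exact myIntPos m (fun i => u i) hne
  haveI : Nontrivial (EuclideanSpace ℝ (Fin m)) :=
    Module.nontrivial_of_finrank_pos (R := ℝ) (by rw [finrank_euclideanSpace_fin]; omega)
  obtain ⟨b₀, hb₀mem, hb₀min'⟩ := IsCompact.exists_isMinOn
    (isCompact_sphere (0:EuclideanSpace ℝ (Fin m)) 1)
    (NormedSpace.sphere_nonempty.mpr zero_le_one) hHc.continuousOn
  have hb₀min := isMinOn_iff.mp hb₀min'
  have hb₀ : ‖b₀‖ = 1 := mem_sphere_zero_iff_norm.mp hb₀mem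
  refine ⟨H b₀, hpos b₀ hb₀, ?_⟩
  intro b
  by_cases hb : b = 0
  · subst hb; simp
  set B : EuclideanSpace ℝ (Fin m) := (WithLp.equiv 2 (Fin m → ℝ)).symm b with hB
  have hBi : ∀ i, B i = b i := fun i => rfl
  have hBne : B ≠ 0 := by
    intro h; apply hb; funext i; rw [← hBi i, h]; simp
  set s : ℝ := ‖B‖ with hs
  have hspos : 0 < s := norm_pos_iff.mpr hBne
  set u : EuclideanSpace ℝ (Fin m) := s⁻¹ • B with hu
  have humem : u ∈ Metric.sphere (0:EuclideanSpace ℝ (Fin m)) 1 := by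
    rw [mem_sphere_zero_iff_norm, hu, norm_smul, norm_inv, norm_norm, ← hs,
      inv_mul_cancel₀ hspos.ne']
  have hui : ∀ i, u i = s⁻¹ * b i := fun i => by
    rw [hu]; rw [PiLp.smul_apply, smul_eq_mul, hBi]
  have hHu : H u = s⁻¹^2 * H B := by
    rw [hH]
    simp only [hui]
    rw [Finset.mul_sum]
    refine Finset.sum_congr rfl fun i _ => ?_
    rw [Finset.mul_sum]
    refine Finset.sum_congr rfl fun j _ => ?_
    rw [hBi, hBi]; ring
  have hkey := hb₀min u humem
  rw [hHu] at hkey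
  have hnorm : ∑ i : Fin m, (b i)^2 = s^2 := by
    rw [hs, EuclideanSpace.norm_eq, Real.sq_sqrt (Finset.sum_nonneg fun i _ => sq_nonneg _)]
    exact Finset.sum_congr rfl fun i _ => by rw [hBi, Real.norm_eq_abs, sq_abs]
  have hHB : H B = ∑ i : Fin m, ∑ j : Fin m, b i * b j / (((i:ℕ):ℝ)+((j:ℕ):ℝ)+3) := rfl
  rw [← hHB, hnorm]
  have hs2 : 0 < s^2 := by positivity
  calc H b₀ * s^2 ≤ (s⁻¹^2 * H B) * s^2 := by nlinarith
    _ = H B := by field_simp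

theorem myDelta (m : ℕ) (hm : 1 ≤ m) (v : Fin m → EuclideanSpace ℝ (Fin m))
    (hindep : LinearIndependent ℝ v) :
    ∃ δ > (0:ℝ), ∀ η : EuclideanSpace ℝ (Fin m), ‖η‖ = 1 →
      δ ≤ ∑ i : Fin m, (inner ℝ η (v i) : ℝ)^2 := by
  set D : EuclideanSpace ℝ (Fin m) → ℝ := fun η => ∑ i : Fin m, (inner ℝ η (v i) : ℝ)^2 with hD
  have hDc : Continuous D := by
    refine continuous_finset_sum _ fun i _ => ?_
    exact (continuous_id.inner continuous_const).pow 2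
  haveI : Nonempty (Fin m) := ⟨⟨0, hm⟩⟩
  have hspan : Submodule.span ℝ (Set.range v) = ⊤ :=
    hindep.span_eq_top_of_card_eq_finrank (by simp [finrank_euclideanSpace_fin])
  have hpos : ∀ η : EuclideanSpace ℝ (Fin m), ‖η‖ = 1 → 0 < D η := by
    intro η hη
    rcases lt_or_eq_of_le (Finset.sum_nonneg fun i _ => sq_nonneg ((inner ℝ η (v i) : ℝ))) with h | h
    · exact h
    exfalso
    have hzero : ∀ i, (inner ℝ η (v i) : ℝ) = 0 := by
      intro i
      have := (Finset.sum_eq_zero_iff_of_nonneg (fun i _ => sq_nonneg ((inner ℝ η (v i) : ℝ)))).mp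
        h.symm i (Finset.mem_univ i)
      exact pow_eq_zero_iff (by norm_num) |>.mp this
    have hall : ∀ w ∈ Submodule.span ℝ (Set.range v), (inner ℝ η w : ℝ) = 0 := by
      intro w hw
      induction hw using Submodule.span_induction with
      | mem x hx => obtain ⟨i, rfl⟩ := hx; exact hzero i
      | zero => simp
      | add x y _ _ hx hy => rw [inner_add_right, hx, hy, add_zero]
      | smul a x _ hx => rw [real_inner_smul_right, hx, mul_zero]
    have : (inner ℝ η η : ℝ) = 0 := hall η (hspan ▸ Submodule.mem_top)
    rw [real_inner_self_eq_norm_sq, hη] at this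
    norm_num at this
  haveI : Nontrivial (EuclideanSpace ℝ (Fin m)) :=
    Module.nontrivial_of_finrank_pos (R := ℝ) (by rw [finrank_euclideanSpace_fin]; omega)
  obtain ⟨η₀, hmem, hmin'⟩ := IsCompact.exists_isMinOn
    (isCompact_sphere (0:EuclideanSpace ℝ (Fin m)) 1)
    (NormedSpace.sphere_nonempty.mpr zero_le_one) hDc.continuousOn
  refine ⟨D η₀, hpos η₀ (mem_sphere_zero_iff_norm.mp hmem), ?_⟩
  intro η hη
  exact isMinOn_iff.mp hmin' η (mem_sphere_zero_iff_norm.mpr hη)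

/-- **Lemma JJ21.** If `ψ : [0,1] → ℝᵐ` is `C^{m+1}` and the derivative vectors
`ψ⁽¹⁾(p), …, ψ⁽ᵐ⁾(p)` are linearly independent at an interior point `p`, then there is a
constant `C₁ > 0` such that for all sufficiently small `ε > 0` and every unit vector `η`,
`∫_{p-ε}^{p+ε} ⟨η, ψ(x) − P⟩² dx ≥ C₁ ε^{2m+1}`. -/
theorem statement16 (m : ℕ) (hm : 1 ≤ m)
    (ψ : ℝ → EuclideanSpace ℝ (Fin m))
    (hψ : ContDiffOn ℝ (m + 1) ψ (Icc (0:ℝ) 1))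
    (p : ℝ) (hp : p ∈ Ioo (0:ℝ) 1)
    (P : EuclideanSpace ℝ (Fin m)) (hP : P = ψ p)
    (hindep : LinearIndependent ℝ
      (fun n : Fin m => iteratedDerivWithin ((n : ℕ) + 1) ψ (Icc (0:ℝ) 1) p)) :
    ∃ C₁ > (0:ℝ), ∃ ε' > (0:ℝ), ∀ ε : ℝ, 0 < ε → ε < ε' →
      ∀ η : EuclideanSpace ℝ (Fin m), ‖η‖ = 1 →
        C₁ * ε ^ (2 * m + 1) ≤ ∫ x in (p - ε)..(p + ε), (inner ℝ η (ψ x - P) : ℝ) ^ 2 := by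
  obtain ⟨lam, hlam, hlamle⟩ := myLam m hm
  set v : Fin m → EuclideanSpace ℝ (Fin m) :=
    fun i => iteratedDerivWithin ((i:ℕ)+1) ψ (Icc (0:ℝ) 1) p with hv
  obtain ⟨δ, hδ, hδle⟩ := myDelta m hm v hindep
  have hψ' : ContDiffOn ℝ (((m+1 : ℕ) : ℕ∞)) ψ (Icc (0:ℝ) 1) := by exact_mod_cast hψ
  have hfact : (0:ℝ) < (m.factorial : ℝ) := by exact_mod_cast m.factorial_pos
  -- global bound on the (m+1)-st derivative
  obtain ⟨M₀, hM₀⟩ := isCompact_Icc.exists_bound_of_continuousOn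
    (hψ'.continuousOn_iteratedDerivWithin (by exact_mod_cast le_rfl) (uniqueDiffOn_Icc one_pos))
  set M : ℝ := max M₀ 0 with hM
  have hMnn : 0 ≤ M := le_max_right _ _
  have hMb : ∀ y ∈ Icc (0:ℝ) 1, ‖iteratedDerivWithin (m+1) ψ (Icc (0:ℝ) 1) y‖ ≤ M :=
    fun y hy => (hM₀ y hy).trans (le_max_left _ _)
  set A : ℝ := lam * (δ / ((m.factorial : ℝ))^2) / 2 with hA
  have hApos : 0 < A := by positivity
  set B : ℝ := (M / (m.factorial : ℝ))^2 / (2*(m:ℝ)+3) with hB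
  have hBnn : 0 ≤ B := by positivity
  refine ⟨A/2, by positivity,
    min (min p (1-p)) (min 1 (Real.sqrt (A / (2*(B+1))))), ?_, ?_⟩
  · have h1 : 0 < min p (1-p) := lt_min hp.1 (by linarith [hp.2])
    have h2 : 0 < Real.sqrt (A / (2*(B+1))) := Real.sqrt_pos.mpr (by positivity)
    exact lt_min h1 (lt_min one_pos h2)
  intro ε hε hεlt η hη
  have hεp : ε < p := lt_of_lt_of_le hεlt ((min_le_left _ _).trans (min_le_left _ _))
  have hεp1 : ε < 1 - p := lt_of_lt_of_le hεlt ((min_le_left _ _).trans (min_le_right _ _))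
  have hε1 : ε ≤ 1 := le_of_lt (lt_of_lt_of_le hεlt ((min_le_right _ _).trans (min_le_left _ _)))
  have hεsq : B * ε^2 ≤ A / 2 := by
    have h := lt_of_lt_of_le hεlt ((min_le_right _ _).trans (min_le_right _ _))
    have h2 : ε^2 < A / (2*(B+1)) := (Real.lt_sqrt hε.le).mp h
    have h3 : (B+1) * ε^2 < A/2 := by
      rw [div_mul_eq_div_div] at h2
      calc (B+1) * ε^2 < (B+1) * (A/2/(B+1)) := by
            apply mul_lt_mul_of_pos_left h2 (by positivity)
        _ = A/2 := by field_simp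
    nlinarith [sq_nonneg ε]
  -- interval containment
  have hpε : p < p + ε := by linarith
  have hSsub : Icc p (p+ε) ⊆ Icc (0:ℝ) 1 := by
    apply Icc_subset_Icc <;> linarith [hp.1, hp.2]
  have hEq : ∀ n : ℕ, n ≤ m+1 →
      Set.EqOn (iteratedDerivWithin n ψ (Icc p (p+ε))) (iteratedDerivWithin n ψ (Icc (0:ℝ) 1))
        (Icc p (p+ε)) :=
    myIteratedDerivWithin_subset hSsub (uniqueDiffOn_Icc hpε) (uniqueDiffOn_Icc one_pos) hψ'
  have hpmem : p ∈ Icc p (p+ε) := left_mem_Icc.mpr hpε.le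
  -- the model polynomial coefficients
  set c : Fin m → ℝ := fun i => (inner ℝ η (v i) : ℝ) / (((i:ℕ)+1).factorial : ℝ) with hc
  set Q : ℝ → ℝ := fun u => ∑ i : Fin m, c i * u ^ ((i:ℕ)+1) with hQ
  -- Taylor approximation
  have htaylor : ∀ x ∈ Icc p (p+ε),
      ‖ψ x - taylorWithinEval ψ m (Icc p (p+ε)) p x‖ ≤ M * (x - p)^(m+1) / (m.factorial : ℝ) := by
    intro x hx
    refine taylor_mean_remainder_bound hpε.le (hψ.mono hSsub) hx ?_
    intro y hy
    rw [hEq (m+1) le_rfl hy]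
    exact hMb y (hSsub hy)
  -- identification of the Taylor polynomial with Q
  have hTQ : ∀ x : ℝ, (inner ℝ η (taylorWithinEval ψ m (Icc p (p+ε)) p x - P) : ℝ) = Q (x - p) := by
    intro x
    rw [taylor_within_apply, Finset.sum_range_succ']
    have h0 : (((0:ℕ).factorial:ℝ)⁻¹ * (x-p)^0) • iteratedDerivWithin 0 ψ (Icc p (p+ε)) p
        = ψ p := by simp
    rw [h0, hP, add_sub_cancel_right, inner_sum]
    rw [hQ, Finset.sum_range fun i =>
      (inner ℝ η (((((i:ℕ)+1).factorial:ℝ)⁻¹ * (x-p)^((i:ℕ)+1)) •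
        iteratedDerivWithin ((i:ℕ)+1) ψ (Icc p (p+ε)) p) : ℝ)]
    refine Finset.sum_congr rfl fun i _ => ?_
    rw [real_inner_smul_right, hEq ((i:ℕ)+1) (by omega) hpmem]
    rw [hc]
    field_simp
    ring
  -- pointwise bound
  have hptw : ∀ x ∈ Icc p (p+ε),
      Q (x-p)^2/2 - (M / (m.factorial : ℝ))^2 * (x-p)^(2*m+2) ≤ (inner ℝ η (ψ x - P) : ℝ)^2 := by
    intro x hx
    set f := (inner ℝ η (ψ x - P) : ℝ) with hf
    have hdiff : f - Q (x-p) = (inner ℝ η (ψ x - taylorWithinEval ψ m (Icc p (p+ε)) p x) : ℝ) := by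
      rw [hf, ← hTQ x, ← inner_sub_right]
      congr 1
      abel
    have habs : |f - Q (x-p)| ≤ M * (x - p)^(m+1) / (m.factorial : ℝ) := by
      rw [hdiff]
      calc |(inner ℝ η (ψ x - taylorWithinEval ψ m (Icc p (p+ε)) p x) : ℝ)|
          ≤ ‖η‖ * ‖ψ x - taylorWithinEval ψ m (Icc p (p+ε)) p x‖ := abs_real_inner_le_norm _ _
        _ ≤ M * (x - p)^(m+1) / (m.factorial : ℝ) := by
            rw [hη, one_mul]; exact htaylor x hx
    have hsq : (f - Q (x-p))^2 ≤ (M / (m.factorial : ℝ))^2 * (x-p)^(2*m+2) := by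
      have h1 : (f - Q (x-p))^2 ≤ (M * (x - p)^(m+1) / (m.factorial : ℝ))^2 := by
        rw [← sq_abs]
        exact pow_le_pow_left₀ (abs_nonneg _) habs 2
      refine h1.trans_eq ?_
      rw [div_pow, mul_pow, ← pow_mul]
      have : (m+1)*2 = 2*m+2 := by omega
      rw [this]
      ring
    nlinarith [sq_nonneg (2*f - Q (x-p))]
  -- continuity and integrability
  have hcontf : ContinuousOn (fun x => (inner ℝ η (ψ x - P) : ℝ)^2) (Icc (0:ℝ) 1) :=
    (ContinuousOn.inner continuousOn_const ((hψ.continuousOn).sub continuousOn_const)).pow 2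
  have hmem1 : p - ε ∈ Icc (0:ℝ) 1 := ⟨by linarith, by linarith⟩
  have hmem2 : p ∈ Icc (0:ℝ) 1 := ⟨hp.1.le, hp.2.le⟩
  have hmem3 : p + ε ∈ Icc (0:ℝ) 1 := ⟨by linarith, by linarith⟩
  have hint : ∀ u w : ℝ, u ∈ Icc (0:ℝ) 1 → w ∈ Icc (0:ℝ) 1 →
      IntervalIntegrable (fun x => (inner ℝ η (ψ x - P) : ℝ)^2) MeasureTheory.volume u w :=
    fun u w hu hw => (hcontf.mono (uIcc_subset_Icc hu hw)).intervalIntegrable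
  have hQc : Continuous Q := continuous_finset_sum _ fun i _ => by fun_prop
  have hlow1c : Continuous (fun x : ℝ => Q (x-p)^2/2) := by
    exact ((hQc.comp (continuous_id.sub continuous_const)).pow 2).div_const 2
  have hlow2c : Continuous (fun x : ℝ => (M/(m.factorial:ℝ))^2 * (x-p)^(2*m+2)) := by
    exact continuous_const.mul ((continuous_id.sub continuous_const).pow _)
  -- split the integral
  have hsplit := intervalIntegral.integral_add_adjacent_intervals
    (hint (p-ε) p hmem1 hmem2) (hint p (p+ε) hmem2 hmem3)
  have hleft : 0 ≤ ∫ x in (p-ε)..p, (inner ℝ η (ψ x - P) : ℝ)^2 :=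
    intervalIntegral.integral_nonneg (by linarith) (fun u _ => sq_nonneg _)
  -- monotonicity
  have hmono : (∫ x in p..(p+ε), (Q (x-p)^2/2 - (M/(m.factorial:ℝ))^2 * (x-p)^(2*m+2)))
      ≤ ∫ x in p..(p+ε), (inner ℝ η (ψ x - P) : ℝ)^2 :=
    intervalIntegral.integral_mono_on hpε.le
      ((hlow1c.sub hlow2c).intervalIntegrable _ _) (hint p (p+ε) hmem2 hmem3) hptw
  -- compute the lower integral
  have hQint : (∫ x in p..(p+ε), Q (x-p)^2)
      = ∑ i : Fin m, ∑ j : Fin m, c i * c j * ε ^ ((i:ℕ)+(j:ℕ)+3) / ((i:ℕ)+(j:ℕ)+3) := by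
    have h := intervalIntegral.integral_comp_sub_right (a := p) (b := p+ε) (fun u => Q u^2) p
    rw [h, sub_self, add_sub_cancel_left]
    exact myPolyInt m c ε
  have hPint : (∫ x in p..(p+ε), (x-p)^(2*m+2)) = ε^(2*m+3)/(2*(m:ℝ)+3) := by
    have h := intervalIntegral.integral_comp_sub_right (a := p) (b := p+ε)
      (fun u => u^(2*m+2)) p
    rw [h, sub_self, add_sub_cancel_left, integral_pow, zero_pow (by omega), sub_zero]
    norm_num
    ring
  have hlowint : (∫ x in p..(p+ε), (Q (x-p)^2/2 - (M/(m.factorial:ℝ))^2 * (x-p)^(2*m+2)))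
      = (∑ i : Fin m, ∑ j : Fin m, c i * c j * ε ^ ((i:ℕ)+(j:ℕ)+3) / ((i:ℕ)+(j:ℕ)+3))/2
        - (M/(m.factorial:ℝ))^2 * (ε^(2*m+3)/(2*(m:ℝ)+3)) := by
    rw [intervalIntegral.integral_sub (hlow1c.intervalIntegrable _ _)
      (hlow2c.intervalIntegrable _ _), intervalIntegral.integral_div,
      intervalIntegral.integral_const_mul, hQint, hPint]
  -- lower bounds on the polynomial part
  have hb1 : lam * (∑ i : Fin m, (c i * ε^((i:ℕ)+1))^2) * ε
      ≤ ∑ i : Fin m, ∑ j : Fin m, c i * c j * ε ^ ((i:ℕ)+(j:ℕ)+3) / ((i:ℕ)+(j:ℕ)+3) := by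
    have h := hlamle (fun i => c i * ε^((i:ℕ)+1))
    calc lam * (∑ i : Fin m, (c i * ε^((i:ℕ)+1))^2) * ε
        ≤ (∑ i : Fin m, ∑ j : Fin m,
            (c i * ε^((i:ℕ)+1)) * (c j * ε^((j:ℕ)+1)) / (((i:ℕ):ℝ)+((j:ℕ):ℝ)+3)) * ε :=
          mul_le_mul_of_nonneg_right h hε.le
      _ = ∑ i : Fin m, ∑ j : Fin m, c i * c j * ε ^ ((i:ℕ)+(j:ℕ)+3) / ((i:ℕ)+(j:ℕ)+3) := by
          rw [Finset.sum_mul]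
          refine Finset.sum_congr rfl fun i _ => ?_
          rw [Finset.sum_mul]
          refine Finset.sum_congr rfl fun j _ => ?_
          rw [pow_add, pow_add]
          ring
  have hb2 : δ/((m.factorial:ℝ))^2 * ε^(2*m) ≤ ∑ i : Fin m, (c i * ε^((i:ℕ)+1))^2 := by
    have hper : ∀ i : Fin m,
        (inner ℝ η (v i):ℝ)^2/((m.factorial:ℝ))^2 * ε^(2*m) ≤ (c i * ε^((i:ℕ)+1))^2 := by
      intro i
      have heq : (c i * ε^((i:ℕ)+1))^2
          = (inner ℝ η (v i):ℝ)^2/((((i:ℕ)+1).factorial:ℝ))^2 * ε^(2*(i:ℕ)+2) := by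
        rw [hc, mul_pow, div_pow, ← pow_mul]
        have : ((i:ℕ)+1)*2 = 2*(i:ℕ)+2 := by ring
        rw [this]
      rw [heq]
      have hi := i.isLt
      have hf2 : ((((i:ℕ)+1).factorial:ℝ))^2 ≤ ((m.factorial:ℝ))^2 := by
        have h := Nat.factorial_le (show (i:ℕ)+1 ≤ m by omega)
        have h' : ((((i:ℕ)+1).factorial:ℝ)) ≤ ((m.factorial:ℝ)) := by exact_mod_cast h
        have hnn : (0:ℝ) ≤ (((i:ℕ)+1).factorial:ℝ) := by positivity
        nlinarith
      refine mul_le_mul ?_ ?_ (pow_nonneg hε.le _) (by positivity)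
      · exact div_le_div_of_nonneg_left (sq_nonneg _) (by positivity) hf2
      · exact pow_le_pow_of_le_one hε.le hε1 (by omega)
    calc δ/((m.factorial:ℝ))^2 * ε^(2*m)
        ≤ (∑ i : Fin m, (inner ℝ η (v i):ℝ)^2)/((m.factorial:ℝ))^2 * ε^(2*m) := by
          gcongr
          exact hδle η hη
      _ = ∑ i : Fin m, (inner ℝ η (v i):ℝ)^2/((m.factorial:ℝ))^2 * ε^(2*m) := by
          rw [Finset.sum_div, Finset.sum_mul]
      _ ≤ ∑ i : Fin m, (c i * ε^((i:ℕ)+1))^2 := Finset.sum_le_sum fun i _ => hper i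
  -- assemble
  have hQQ : A * 2 * ε^(2*m+1)
      ≤ ∑ i : Fin m, ∑ j : Fin m, c i * c j * ε ^ ((i:ℕ)+(j:ℕ)+3) / ((i:ℕ)+(j:ℕ)+3) := by
    have h1 : lam * (δ/((m.factorial:ℝ))^2 * ε^(2*m)) * ε
        ≤ lam * (∑ i : Fin m, (c i * ε^((i:ℕ)+1))^2) * ε := by
      gcongr
    have h2 : A * 2 * ε^(2*m+1) = lam * (δ/((m.factorial:ℝ))^2 * ε^(2*m)) * ε := by
      rw [hA, pow_succ]
      ring
    linarith [h1.trans hb1]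
  have hεpow : ε^(2*m+3) = ε^2 * ε^(2*m+1) := by ring
  have hBe : (M/(m.factorial:ℝ))^2 * (ε^(2*m+3)/(2*(m:ℝ)+3)) = (B * ε^2) * ε^(2*m+1) := by
    rw [hB, hεpow]
    ring
  have hpow_nn : (0:ℝ) ≤ ε^(2*m+1) := by positivity
  have hBound : B*ε^2*ε^(2*m+1) ≤ A/2 * ε^(2*m+1) :=
    mul_le_mul_of_nonneg_right hεsq hpow_nn
  have hfinal : A/2 * ε^(2*m+1)
      ≤ ∫ x in p..(p+ε), (inner ℝ η (ψ x - P) : ℝ)^2 := by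
    have hstep : A/2 * ε^(2*m+1)
        ≤ (∑ i : Fin m, ∑ j : Fin m, c i * c j * ε ^ ((i:ℕ)+(j:ℕ)+3) / ((i:ℕ)+(j:ℕ)+3))/2
          - (M/(m.factorial:ℝ))^2 * (ε^(2*m+3)/(2*(m:ℝ)+3)) := by
      rw [hBe]
      linarith [hQQ, hBound]
    exact hstep.trans (hlowint ▸ hmono)
  rw [← hsplit]
  linarith [hfinal]
end

section
/- Let p(x, y) be a real polynomial in two variables of total degree at most d (every monomial in p has total degree at most d). Suppose there exist a constant C > 0, an exponent q > d, and a sequence of points (x_k, y_k) → (0,0) in ℝ², with (x_k, y_k) ≠ (0,0), such that |p(x_k, y_k)| ≤ C ‖(x_k, y_k)‖^q for all k. If the set {(x_k, y_k) : k ≥ 0} has d + 1 distinct approach directions at (0,0), then p(x, y) = 0 for all (x, y) ∈ ℝ². -/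
open Filter Topology

/-- A set `S` has the approach direction `l` (a unit vector) at the base point `P`. -/
def HasApproachDirection {E : Type*} [NormedAddCommGroup E] [NormedSpace ℝ E]
    (S : Set E) (P l : E) : Prop :=
  ‖l‖ = 1 ∧ ∃ Q : ℕ → E, (∀ k, Q k ∈ S) ∧ (∀ k, Q k ≠ P) ∧
    Filter.Tendsto Q Filter.atTop (nhds P) ∧
    Filter.Tendsto (fun k => ‖Q k - P‖⁻¹ • (Q k - P)) Filter.atTop (nhds l)

/-- `S` has `d` distinct approach directions at `P`. -/
def HasDistinctApproachDirections {E : Type*} [NormedAddCommGroup E] [NormedSpace ℝ E]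
    (S : Set E) (P : E) (d : ℕ) : Prop :=
  ∃ l : Fin d → E, (∀ i, HasApproachDirection S P (l i)) ∧
    ∀ i j, i ≠ j → l i ≠ l j ∧ l i ≠ -l j

lemma eval_smul_isHom {σ : Type*} {P : MvPolynomial σ ℝ} {m : ℕ}
    (h : P.IsHomogeneous m) (c : ℝ) (v : σ → ℝ) :
    MvPolynomial.eval (c • v) P = c ^ m * MvPolynomial.eval v P := by
  rw [MvPolynomial.eval_eq, MvPolynomial.eval_eq, Finset.mul_sum]
  refine Finset.sum_congr rfl fun d hd => ?_
  have hm : ∑ i ∈ d.support, d i = m := by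
    have h1 := h (MvPolynomial.mem_support_iff.mp hd)
    have h2 : d.degree = m := by
      rw [Finsupp.degree_eq_weight_one]; exact h1
    simpa [Finsupp.degree_apply] using h2
  have hprod : ∀ i ∈ d.support, (c • v) i ^ d i = c ^ d i * v i ^ d i := by
    intro i _; simp [mul_pow]
  rw [Finset.prod_congr rfl hprod, Finset.prod_mul_distrib,
    Finset.prod_pow_eq_pow_sum, hm]
  ring

lemma fin2_sum_eq {m : ℕ} {P : MvPolynomial (Fin 2) ℝ} (h : P.IsHomogeneous m)
    {d : Fin 2 →₀ ℕ} (hd : d ∈ P.support) : d 0 + d 1 = m := by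
  have h1 := h (MvPolynomial.mem_support_iff.mp hd)
  have h2 : Finsupp.weight (1 : Fin 2 → ℕ) d = d 0 + d 1 := by
    rw [Finsupp.weight_apply, Finsupp.sum_fintype]
    · simp [Fin.sum_univ_two]
    · intro i; simp
  rw [h2] at h1
  exact h1

lemma binary_vanish {m n : ℕ} (hmn : m < n) {P : MvPolynomial (Fin 2) ℝ}
    (h : P.IsHomogeneous m) (w : Fin n → Fin 2 → ℝ) (hw0 : ∀ i, w i ≠ 0)
    (hind : ∀ i j, i ≠ j → ∀ c : ℝ, w i ≠ c • w j)
    (hvan : ∀ i, MvPolynomial.eval (w i) P = 0) : P = 0 := by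
  classical
  set f : Polynomial ℝ :=
    ∑ d ∈ P.support, Polynomial.C (MvPolynomial.coeff d P) * Polynomial.X ^ (d 0) with hf
  have hcoeff : ∀ j, f.coeff j =
      ∑ d ∈ P.support, if d 0 = j then MvPolynomial.coeff d P else 0 := by
    intro j
    rw [hf, Polynomial.finset_sum_coeff]
    refine Finset.sum_congr rfl fun d _ => ?_
    rw [Polynomial.coeff_C_mul, Polynomial.coeff_X_pow]
    by_cases hdj : d 0 = j
    · simp [hdj]
    · rw [if_neg (Ne.symm hdj), if_neg hdj, mul_zero]
  have hdegf : f.natDegree ≤ m := by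
    apply Polynomial.natDegree_sum_le_of_forall_le
    intro d hd
    exact le_trans (Polynomial.natDegree_C_mul_X_pow_le _ _)
      (le_trans (Nat.le_add_right _ _) (le_of_eq (fin2_sum_eq h hd)))
  have hfP : f = 0 → P = 0 := by
    intro hf0
    apply MvPolynomial.ext
    intro d
    rw [MvPolynomial.coeff_zero]
    by_cases hd : d ∈ P.support
    · have := hcoeff (d 0)
      rw [hf0] at this
      simp only [Polynomial.coeff_zero] at this
      have huniq : ∑ e ∈ P.support, (if e 0 = d 0 then MvPolynomial.coeff e P else 0)
          = MvPolynomial.coeff d P := by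
        rw [Finset.sum_eq_single d]
        · simp
        · intro e he hne
          by_cases h0 : e 0 = d 0
          · exfalso
            apply hne
            have h1 : e 1 = d 1 := by
              have := fin2_sum_eq h he
              have := fin2_sum_eq h hd
              omega
            ext i
            fin_cases i
            · exact h0
            · exact h1
          · simp [h0]
        · intro hdd; exact absurd hd hdd
      rw [huniq] at this
      exact this.symm
    · exact MvPolynomial.notMem_support_iff.mp hd
  -- evaluation formula for vectors with second coordinate 1
  have hfeval : ∀ v : Fin 2 → ℝ, v 1 = 1 → MvPolynomial.eval v P = f.eval (v 0) := by
    intro v hv1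
    rw [MvPolynomial.eval_eq', hf]
    rw [Polynomial.eval_finset_sum]
    refine Finset.sum_congr rfl fun d _ => ?_
    simp [Fin.prod_univ_two, hv1]
  -- ratios
  set r : Fin n → ℝ := fun i => w i 0 / w i 1 with hr
  have hroot : ∀ i, w i 1 ≠ 0 → f.eval (r i) = 0 := by
    intro i hb
    have hsm : MvPolynomial.eval ((w i 1)⁻¹ • w i) P
        = ((w i 1)⁻¹) ^ m * MvPolynomial.eval (w i) P := eval_smul_isHom h _ _
    rw [hvan i, mul_zero] at hsm
    have hv1 : ((w i 1)⁻¹ • w i) 1 = 1 := by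
      simp [inv_mul_cancel₀ hb]
    have hv0 : ((w i 1)⁻¹ • w i) 0 = r i := by
      simp [hr, div_eq_inv_mul]
    rw [hfeval _ hv1, hv0] at hsm
    exact hsm
  have hrinj : ∀ i j, w i 1 ≠ 0 → w j 1 ≠ 0 → r i = r j → i = j := by
    intro i j hbi hbj hrij
    by_contra hne
    apply hind i j hne (w i 1 / w j 1)
    funext t
    fin_cases t
    · show w i 0 = (w i 1 / w j 1) * w j 0
      have : w i 0 / w i 1 = w j 0 / w j 1 := hrij
      field_simp at this ⊢
      linarith [this]
    · show w i 1 = (w i 1 / w j 1) * w j 1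
      field_simp
  by_cases hball : ∀ i, w i 1 ≠ 0
  · apply hfP
    apply Polynomial.eq_zero_of_natDegree_lt_card_of_eval_eq_zero f
      (f := r) (fun i j hij => hrinj i j (hball i) (hball j) hij)
      (fun i => hroot i (hball i))
    rw [Fintype.card_fin]
    omega
  · push_neg at hball
    obtain ⟨i0, hb0⟩ := hball
    have ha0 : w i0 0 ≠ 0 := by
      intro ha
      apply hw0 i0
      funext t; fin_cases t
      · exact ha
      · exact hb0
    have hother : ∀ i, i ≠ i0 → w i 1 ≠ 0 := by
      intro i hi hbi
      apply hind i i0 hi (w i 0 / w i0 0)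
      funext t; fin_cases t
      · show w i 0 = (w i 0 / w i0 0) * w i0 0
        field_simp
      · show w i 1 = (w i 0 / w i0 0) * w i0 1
        rw [hbi, hb0, mul_zero]
    -- top coefficient vanishes
    have htop : f.coeff m = 0 := by
      have heval0 : MvPolynomial.eval (w i0) P = f.coeff m * (w i0 0) ^ m := by
        rw [MvPolynomial.eval_eq', hcoeff m, Finset.sum_mul]
        refine Finset.sum_congr rfl fun d hd => ?_
        have hsum := fin2_sum_eq h hd
        by_cases hdm : d 0 = m
        · have hd1 : d 1 = 0 := by omega
          simp [Fin.prod_univ_two, hdm, hd1, hb0]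
        · have hd1 : d 1 ≠ 0 := by omega
          simp [Fin.prod_univ_two, hdm, hb0, zero_pow hd1]
      rw [hvan i0] at heval0
      rcases mul_eq_zero.mp heval0.symm with h1 | h2
      · exact h1
      · exact absurd h2 (pow_ne_zero _ ha0)
    have hfz : f = 0 := by
      by_contra hfne
      have hdlt : f.natDegree < m := by
        rcases lt_or_eq_of_le hdegf with h1 | h1
        · exact h1
        · exfalso
          have hlc := Polynomial.leadingCoeff_ne_zero.mpr hfne
          rw [Polynomial.leadingCoeff, h1] at hlc
          exact hlc htop
      apply hfne
      apply Polynomial.eq_zero_of_natDegree_lt_card_of_eval_eq_zero f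
        (f := fun i : {i : Fin n // i ≠ i0} => r i.1)
        (fun i j hij => Subtype.ext (hrinj i.1 j.1 (hother i.1 i.2) (hother j.1 j.2) hij))
        (fun i => hroot i.1 (hother i.1 i.2))
      have hcard : Fintype.card {i : Fin n // i ≠ i0} = n - 1 := by
        simp [Fintype.card_subtype_compl, Fintype.card_fin]
      rw [hcard]
      omega
    exact hfP hfz

/-- **Proposition PP2.** Let `p(x, y)` be a real polynomial of total degree at most `d`.
If `|p(x_k, y_k)| ≤ C ‖(x_k, y_k)‖^q` along a sequence of nonzero points of the plane
converging to the origin, with `q > d`, and the set of these points has `d + 1` distinct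
approach directions at the origin, then `p` is identically zero. -/
theorem statement19 (d : ℕ) (p : MvPolynomial (Fin 2) ℝ)
    (hdeg : p.totalDegree ≤ d)
    (C : ℝ) (hC : 0 < C) (q : ℝ) (hq : (d : ℝ) < q)
    (z : ℕ → EuclideanSpace ℝ (Fin 2))
    (hz0 : ∀ k, z k ≠ 0) (hzlim : Tendsto z atTop (𝓝 0))
    (hbound : ∀ k, |MvPolynomial.eval (fun i => z k i) p| ≤ C * ‖z k‖ ^ q)
    (happr : HasDistinctApproachDirections (Set.range z) 0 (d + 1)) :
    p = 0 := by
  classical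
  obtain ⟨l, hl, hldist⟩ := happr
  set D := p.totalDegree with hD
  have hcont : ∀ (F : MvPolynomial (Fin 2) ℝ),
      Continuous fun v : EuclideanSpace ℝ (Fin 2) => MvPolynomial.eval (fun i => v i) F := by
    intro F
    exact (MvPolynomial.continuous_eval F).comp (PiLp.continuous_ofLp 2 (fun _ : Fin 2 => ℝ))
  have key : ∀ m, m ≤ d → MvPolynomial.homogeneousComponent m p = 0 := by
    intro m
    induction m using Nat.strong_induction_on with
    | _ m IH =>
      intro hm
      by_cases hmD : D < m
      · exact MvPolynomial.homogeneousComponent_eq_zero m p hmD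
      push_neg at hmD
      set P := MvPolynomial.homogeneousComponent m p with hP
      have hPhom : P.IsHomogeneous m := MvPolynomial.homogeneousComponent_isHomogeneous m p
      have hvan : ∀ i : Fin (d+1), MvPolynomial.eval (fun t => l i t) P = 0 := by
        intro i
        obtain ⟨hnorm, Q, hQmem, hQne, hQlim, hQdir⟩ := hl i
        simp only [sub_zero] at hQdir
        have hQpos : ∀ k, (0:ℝ) < ‖Q k‖ := fun k => norm_pos_iff.mpr (hQne k)
        have hQb : ∀ k, |MvPolynomial.eval (fun t => (Q k) t) p| ≤ C * ‖Q k‖ ^ q := by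
          intro k
          obtain ⟨j, hj⟩ := hQmem k
          rw [← hj]
          exact hbound j
        have hνlim : Tendsto (fun k => ‖Q k‖) atTop (𝓝 0) := by
          simpa using hQlim.norm
        set u : ℕ → EuclideanSpace ℝ (Fin 2) := fun k => ‖Q k‖⁻¹ • Q k with hu
        have hufun : ∀ k, (fun t => u k t) = ‖Q k‖⁻¹ • (fun t => Q k t) := by
          intro k; funext t; simp [hu]
        have hQfun : ∀ k, (fun t => Q k t) = ‖Q k‖ • (fun t => u k t) := by
          intro k; funext t
          simp [hu, smul_smul, ← mul_assoc, mul_inv_cancel₀ (hQpos k).ne']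
        have heval_hc : ∀ j k, MvPolynomial.eval (fun t => Q k t)
            (MvPolynomial.homogeneousComponent j p)
            = ‖Q k‖ ^ j * MvPolynomial.eval (fun t => u k t)
                (MvPolynomial.homogeneousComponent j p) := by
          intro j k
          rw [hQfun k]
          exact eval_smul_isHom (MvPolynomial.homogeneousComponent_isHomogeneous j p) _ _
        set g : ℕ → ℝ := fun k => MvPolynomial.eval (fun t => u k t) P with hg
        have hlim1 : Tendsto g atTop (𝓝 (MvPolynomial.eval (fun t => l i t) P)) :=
          ((hcont P).tendsto (l i)).comp hQdir
        -- decomposition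
        have hdecomp : ∀ k, g k
            = ‖Q k‖⁻¹ ^ m * MvPolynomial.eval (fun t => Q k t) p
              - ∑ j ∈ (Finset.range (D+1)).erase m,
                  ‖Q k‖⁻¹ ^ m * MvPolynomial.eval (fun t => Q k t)
                    (MvPolynomial.homogeneousComponent j p) := by
          intro k
          have hsplit : MvPolynomial.eval (fun t => Q k t) p
              = MvPolynomial.eval (fun t => Q k t) P
                + ∑ j ∈ (Finset.range (D+1)).erase m,
                    MvPolynomial.eval (fun t => Q k t)
                      (MvPolynomial.homogeneousComponent j p) := by
            conv_lhs => rw [← MvPolynomial.sum_homogeneousComponent p]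
            rw [← hD, map_sum, ← Finset.add_sum_erase _ _
              (Finset.mem_range.mpr (Nat.lt_succ_of_le hmD))]
          rw [hsplit]
          have hgk : g k = ‖Q k‖⁻¹ ^ m * MvPolynomial.eval (fun t => Q k t) P := by
            rw [hg]
            simp only [hP]
            rw [heval_hc m k, ← mul_assoc, ← mul_pow, inv_mul_cancel₀ (hQpos k).ne',
              one_pow, one_mul]
          rw [hgk, mul_add, Finset.mul_sum]
          ring
        -- limit of the main term
        have hA : Tendsto (fun k => ‖Q k‖⁻¹ ^ m * MvPolynomial.eval (fun t => Q k t) p)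
            atTop (𝓝 0) := by
          have hle : ∀ k, ‖‖Q k‖⁻¹ ^ m * MvPolynomial.eval (fun t => Q k t) p‖
              ≤ C * ‖Q k‖ ^ (q - (m:ℝ)) := by
            intro k
            have hpos := hQpos k
            have hb : ‖Q k‖⁻¹ ^ m * (C * ‖Q k‖ ^ q) = C * ‖Q k‖ ^ (q - (m:ℝ)) := by
              rw [inv_pow, ← Real.rpow_natCast ‖Q k‖ m, ← Real.rpow_neg hpos.le,
                mul_comm, mul_assoc, ← Real.rpow_add hpos, ← sub_eq_add_neg]
            calc ‖‖Q k‖⁻¹ ^ m * MvPolynomial.eval (fun t => Q k t) p‖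
                = ‖Q k‖⁻¹ ^ m * |MvPolynomial.eval (fun t => Q k t) p| := by
                  rw [Real.norm_eq_abs, abs_mul, abs_pow, abs_inv, abs_norm]
              _ ≤ ‖Q k‖⁻¹ ^ m * (C * ‖Q k‖ ^ q) := by
                  apply mul_le_mul_of_nonneg_left (hQb k)
                  positivity
              _ = C * ‖Q k‖ ^ (q - (m:ℝ)) := hb
          refine squeeze_zero_norm hle ?_
          have hcrp : ContinuousAt (fun x : ℝ => x ^ (q - (m:ℝ))) 0 :=
            Real.continuousAt_rpow_const 0 _ (Or.inr (by
              have : (m:ℝ) ≤ d := by exact_mod_cast hm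
              linarith))
          have := (hcrp.tendsto.comp hνlim).const_mul C
          have hne : q - (m:ℝ) ≠ 0 := by
            have : (m:ℝ) ≤ d := by exact_mod_cast hm
            intro hqq
            have := sub_eq_zero.mp hqq
            linarith
          simpa [Real.zero_rpow hne] using this
        -- limit of the remainder terms
        have hB : Tendsto (fun k => ∑ j ∈ (Finset.range (D+1)).erase m,
            ‖Q k‖⁻¹ ^ m * MvPolynomial.eval (fun t => Q k t)
              (MvPolynomial.homogeneousComponent j p)) atTop (𝓝 0) := by
          have : Tendsto (fun k => ∑ j ∈ (Finset.range (D+1)).erase m,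
              (fun j k => ‖Q k‖⁻¹ ^ m * MvPolynomial.eval (fun t => Q k t)
                (MvPolynomial.homogeneousComponent j p)) j k) atTop (𝓝 (∑ j ∈ (Finset.range (D+1)).erase m, 0)) := by
            apply tendsto_finset_sum
            intro j hj
            have hjm : j ≠ m := Finset.ne_of_mem_erase hj
            rcases Nat.lt_or_ge j m with hjlt | hjge
            · have hz : MvPolynomial.homogeneousComponent j p = 0 :=
                IH j hjlt (le_trans (le_of_lt hjlt) hm)
              simp [hz]
            · have hjgt : m < j := lt_of_le_of_ne hjge (Ne.symm hjm)
              have hterm : ∀ k, ‖Q k‖⁻¹ ^ m * MvPolynomial.eval (fun t => Q k t)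
                  (MvPolynomial.homogeneousComponent j p)
                  = ‖Q k‖ ^ (j - m) * MvPolynomial.eval (fun t => u k t)
                      (MvPolynomial.homogeneousComponent j p) := by
                have hs : ∀ (x : ℝ), x ≠ 0 → x⁻¹ ^ m * x ^ j = x ^ (j - m) := by
                  intro x hx
                  rw [pow_sub₀ x hx hjge, inv_pow, mul_comm]
                intro k
                rw [heval_hc j k, ← mul_assoc, hs _ (hQpos k).ne']
              simp only [hterm]
              have h1 : Tendsto (fun k => ‖Q k‖ ^ (j - m)) atTop (𝓝 0) := by
                have := hνlim.pow (j - m)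
                simpa [zero_pow (show j - m ≠ 0 by omega)] using this
              have h2 := ((hcont (MvPolynomial.homogeneousComponent j p)).tendsto (l i)).comp hQdir
              simpa using h1.mul h2
          simpa using this
        have hlim2 : Tendsto g atTop (𝓝 0) := by
          have := hA.sub hB
          simp only [sub_zero] at this
          have heq : (fun k => ‖Q k‖⁻¹ ^ m * MvPolynomial.eval (fun t => Q k t) p
              - ∑ j ∈ (Finset.range (D+1)).erase m,
                  ‖Q k‖⁻¹ ^ m * MvPolynomial.eval (fun t => Q k t)
                    (MvPolynomial.homogeneousComponent j p)) = g := by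
            funext k; rw [hdecomp k]
          rwa [heq] at this
        exact tendsto_nhds_unique hlim1 hlim2
      -- apply the vanishing lemma
      apply binary_vanish (Nat.lt_succ_of_le hm) hPhom (fun i => fun t => l i t)
      · intro i hzero
        have hli : l i = 0 := by
          ext t
          exact congrFun hzero t
        obtain ⟨hnorm, _⟩ := hl i
        rw [hli, norm_zero] at hnorm
        exact one_ne_zero hnorm.symm
      · intro i j hij c hc
        have hlij : l i = c • l j := by
          ext t
          have := congrFun hc t
          simpa using this
        obtain ⟨hni, _⟩ := hl i
        obtain ⟨hnj, _⟩ := hl j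
        rw [hlij, norm_smul, hnj, mul_one, Real.norm_eq_abs] at hni
        rcases abs_eq (by norm_num : (0:ℝ) ≤ 1) |>.mp hni with h1 | h1
        · exact (hldist i j hij).1 (by rw [hlij, h1, one_smul])
        · exact (hldist i j hij).2 (by rw [hlij, h1, neg_smul, one_smul])
      · exact hvan
  rw [← MvPolynomial.sum_homogeneousComponent p]
  apply Finset.sum_eq_zero
  intro j hj
  exact key j (le_trans (Nat.lt_succ_iff.mp (Finset.mem_range.mp hj)) hdeg)
end
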